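/- Let m ∈ ℕ, and B̃_0 < Ã_1 < B̃_1 < ... < Ã_m < B̃_m real with Ã_j ≠ 0. With r̃_j = ((B̃_j − Ã_j)/Ã_j)·Π_{i≠j}((B̃_i − Ã_j)/(Ã_i − Ã_j)), the identity (B̃_k − B̃_0)·Σ_{i=1}^m (Ã_i/(Ã_i − B̃_k)) r̃_i = B̃_0 − B̃_k holds for every k ∈ {0, 1, ..., m} (for k = 0 both sides vanish). -/

import Mathlib

open Polynomial Finset

lemma coeff_lagrange_basis {ι : Type*} [DecidableEq ι] {s : Finset ι} {v : ι → ℝ}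
    (hvs : Set.InjOn v s) {i : ι} (hi : i ∈ s) :
    (Lagrange.basis s v i).coeff (s.card - 1) = ∏ j ∈ s.erase i, (v i - v j)⁻¹ := by
  rw [← Lagrange.natDegree_basis hvs hi, ← Polynomial.leadingCoeff,
    Lagrange.basis, Polynomial.leadingCoeff_prod]
  refine Finset.prod_congr rfl fun j hj => ?_
  rw [Lagrange.basisDivisor, leadingCoeff_mul, leadingCoeff_C,
    (monic_X_sub_C (v j)).leadingCoeff, mul_one]

lemma divided_diff {ι : Type*} [DecidableEq ι] (s : Finset ι) (v : ι → ℝ)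
    (hvs : Set.InjOn v s) (f : ℝ[X]) (hdeg : f.degree < s.card) :
    ∑ i ∈ s, f.eval (v i) * ∏ j ∈ s.erase i, (v i - v j)⁻¹ = f.coeff (s.card - 1) := by
  conv_rhs => rw [Lagrange.eq_interpolate hvs hdeg]
  rw [Lagrange.interpolate_apply, Polynomial.finset_sum_coeff]
  exact Finset.sum_congr rfl fun i hi => by
    rw [Polynomial.coeff_C_mul, coeff_lagrange_basis hvs hi]

lemma prod_erase_succ {m : ℕ} (g : Fin (m + 1) → ℝ) (i : Fin m) :
    ∏ y ∈ Finset.univ.erase i.succ, g y = g 0 * ∏ l ∈ Finset.univ.erase i, g l.succ := by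
  have hset : (Finset.univ : Finset (Fin (m + 1))).erase i.succ
      = insert 0 ((Finset.univ.erase i).map ⟨Fin.succ, Fin.succ_injective m⟩) := by
    ext x
    induction x using Fin.cases with
    | zero => simp [(Fin.succ_ne_zero i).symm]
    | succ a =>
      simp [Fin.succ_inj, (Fin.succ_ne_zero a).symm, eq_comm (a := a)]
  rw [hset, Finset.prod_insert (by simp [(Fin.succ_ne_zero _).symm]), Finset.prod_map]
  rfl



/-- equation (3.4): with interlacing numbers `B̃₀ < Ã₁ < B̃₁ < ⋯ < Ã_m < B̃_m`,
`Ãⱼ ≠ 0`, the vector `z = (r̃₁,…,r̃_m)` with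
`r̃ⱼ = ((B̃ⱼ − Ãⱼ)/Ãⱼ)·∏_{i≠j} (B̃ᵢ − Ãⱼ)/(Ãᵢ − Ãⱼ)` satisfies the identity
`(B̃ₖ − B̃₀)·∑ᵢ (Ãᵢ/(Ãᵢ − B̃ₖ)) r̃ᵢ = B̃₀ − B̃ₖ` for every `k ∈ {0,…,m}` (for `k = 0` both sides vanish).  Here `A j` is `Ã_{j+1}`, `B j` is `B̃_j`. -/
theorem identity_for_all_Bk
    (m : ℕ) (A : Fin m → ℝ) (B : Fin (m + 1) → ℝ)
    (hinter : ∀ j : Fin m, B j.castSucc < A j ∧ A j < B j.succ)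
    (hA0 : ∀ j, A j ≠ 0)
    (r : Fin m → ℝ)
    (hr : ∀ j, r j = (B j.succ - A j) / A j *
      ∏ i ∈ Finset.univ.erase j, (B i.succ - A j) / (A i - A j)) :
    ∀ k : Fin (m + 1), (B k - B 0) * ∑ i, A i / (A i - B k) * r i = B 0 - B k := by
  intro k
  induction k using Fin.cases with
  | zero => simp
  | succ j =>
    have hm : 0 < m := j.pos
    set b := B j.succ with hb
    -- monotonicity facts
    have hBmono : StrictMono B :=
      Fin.strictMono_iff_lt_succ.mpr fun i => lt_trans (hinter i).1 (hinter i).2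
    have hAlt : ∀ i l : Fin m, i < l → A i < A l := by
      intro i l h
      calc A i < B i.succ := (hinter i).2
        _ ≤ B l.castSucc := hBmono.monotone (by
            rw [Fin.succ_le_castSucc_iff]; exact h)
        _ < A l := (hinter l).1
    have hAne : ∀ i l : Fin m, i ≠ l → A i ≠ A l := by
      intro i l h
      rcases h.lt_or_gt with h' | h'
      · exact ne_of_lt (hAlt _ _ h')
      · exact (ne_of_lt (hAlt _ _ h')).symm
    have hAb : ∀ i : Fin m, A i ≠ b := by
      intro i
      rcases lt_trichotomy i j with h | h | h
      · exact ne_of_lt (lt_trans (hAlt _ _ h) (hinter j).2)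
      · subst h; exact ne_of_lt (hinter i).2
      · refine (ne_of_lt ?_).symm
        calc b ≤ B i.castSucc := hBmono.monotone (by
              rw [Fin.succ_le_castSucc_iff]; exact h)
          _ < A i := (hinter i).1
    -- the nodes
    set v : Fin (m + 1) → ℝ := Fin.cases b A with hv
    have hv0 : v 0 = b := rfl
    have hvs : Fin.cases b A (0 : Fin (m+1)) = b := rfl
    have hvsucc : ∀ i : Fin m, v i.succ = A i := fun i => by simp [hv]
    have hinj : Function.Injective v := by
      intro x y hxy
      induction x using Fin.cases with
      | zero =>
        induction y using Fin.cases with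
        | zero => rfl
        | succ l => rw [hv0, hvsucc] at hxy; exact absurd hxy.symm (hAb l)
      | succ i =>
        induction y using Fin.cases with
        | zero => rw [hv0, hvsucc] at hxy; exact absurd hxy (hAb i)
        | succ l =>
          rw [hvsucc, hvsucc] at hxy
          by_contra hne
          exact hAne i l (fun h => hne (by rw [h])) hxy
    -- the polynomial
    set f : ℝ[X] := ∏ i : Fin m, (C (B i.succ) - X) with hfdef
    have hcardv : ((Finset.univ : Finset (Fin m)).card) = m := by simp
    have hf : f = C ((-1 : ℝ) ^ m) * Lagrange.nodal Finset.univ (fun i : Fin m => B i.succ) := by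
      rw [Lagrange.nodal_eq, hfdef, map_pow, map_neg, map_one,
        show ((-1 : ℝ[X]) ^ m) = ∏ _i : Fin m, (-1 : ℝ[X]) by
          rw [Finset.prod_const, hcardv],
        ← Finset.prod_mul_distrib]
      exact Finset.prod_congr rfl fun i _ => by ring
    have hdeg : f.degree < ((Finset.univ : Finset (Fin (m + 1))).card : ℕ) := by
      rw [hf]
      refine lt_of_le_of_lt (degree_mul_le _ _) ?_
      have h1 : (C ((-1 : ℝ) ^ m)).degree ≤ 0 := degree_C_le
      have h2 : (Lagrange.nodal Finset.univ (fun i : Fin m => B i.succ)).degree = (m : ℕ) := by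
        rw [Lagrange.degree_nodal, hcardv]
      rw [h2]
      simp only [Finset.card_univ, Fintype.card_fin]
      calc (C ((-1 : ℝ) ^ m)).degree + (m : ℕ) ≤ 0 + (m : ℕ) := add_le_add_left h1 _
        _ < ((m + 1 : ℕ) : WithBot ℕ) := by
            rw [zero_add]
            exact_mod_cast Nat.lt_succ_self m
    have hcoeff : f.coeff m = (-1 : ℝ) ^ m := by
      have hmon := Lagrange.nodal_monic (s := Finset.univ) (v := fun i : Fin m => B i.succ)
      have hnd : (Lagrange.nodal Finset.univ (fun i : Fin m => B i.succ)).natDegree = m := by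
        rw [Lagrange.natDegree_nodal, hcardv]
      have h1 : (Lagrange.nodal Finset.univ (fun i : Fin m => B i.succ)).coeff m = 1 := by
        have h2 := hmon.coeff_natDegree
        rwa [hnd] at h2
      rw [hf, coeff_C_mul, h1, mul_one]
    have heval : ∀ x : ℝ, f.eval x = ∏ i : Fin m, (B i.succ - x) := by
      intro x; rw [hfdef, eval_prod]; simp
    -- apply divided difference lemma
    have key := divided_diff Finset.univ v (Set.injOn_of_injective hinj) f hdeg
    rw [Finset.card_univ, Fintype.card_fin, Nat.add_sub_cancel, hcoeff,
      Fin.sum_univ_succ] at key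
    have heval0 : f.eval (v 0) = 0 := by
      rw [hv0, heval]
      exact Finset.prod_eq_zero (Finset.mem_univ j) (sub_self b)
    rw [heval0, zero_mul, zero_add] at key
    have key2 : ∑ i : Fin m,
        f.eval (A i) * ((A i - b)⁻¹ * ∏ l ∈ Finset.univ.erase i, (A i - A l)⁻¹)
        = (-1 : ℝ) ^ m := by
      rw [← key]
      refine Finset.sum_congr rfl fun i _ => ?_
      rw [hvsucc i]
      congr 1
      rw [prod_erase_succ (fun y => (A i - v y)⁻¹) i, hv0]
      exact congrArg _ (Finset.prod_congr rfl fun l _ => by rw [hvsucc])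
    -- termwise identity
    have hcard_erase : ∀ i : Fin m, (Finset.univ.erase i).card = m - 1 := by
      intro i
      rw [Finset.card_erase_of_mem (Finset.mem_univ i), Finset.card_univ, Fintype.card_fin]
    have hterm : ∀ i : Fin m, A i / (A i - b) * r i
        = (-1 : ℝ) ^ (m - 1) *
          (f.eval (A i) * ((A i - b)⁻¹ * ∏ l ∈ Finset.univ.erase i, (A i - A l)⁻¹)) := by
      intro i
      have hP : ∏ l ∈ Finset.univ.erase i, (B l.succ - A i) / (A l - A i)
          = (∏ l ∈ Finset.univ.erase i, (B l.succ - A i)) *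
            ((-1 : ℝ) ^ (m - 1) * ∏ l ∈ Finset.univ.erase i, (A i - A l)⁻¹) := by
        rw [Finset.prod_div_distrib]
        rw [div_eq_mul_inv, ← Finset.prod_inv_distrib]
        congr 1
        rw [← hcard_erase i, ← Finset.prod_const, ← Finset.prod_mul_distrib]
        exact Finset.prod_congr rfl fun l _ => by
          rw [neg_one_mul, ← inv_neg, neg_sub]
      have hfi : f.eval (A i) = (B i.succ - A i) * ∏ l ∈ Finset.univ.erase i,
          (B l.succ - A i) := by
        rw [heval, ← Finset.mul_prod_erase _ _ (Finset.mem_univ i)]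
      rw [hr i, hP, hfi]
      have hAib : A i - b ≠ 0 := sub_ne_zero_of_ne (hAb i)
      have hprod : ∏ l ∈ Finset.univ.erase i, (A i - A l) ≠ 0 :=
        Finset.prod_ne_zero_iff.mpr fun l hl =>
          sub_ne_zero_of_ne (hAne i l (Finset.mem_erase.mp hl).1.symm)
      field_simp
      rw [div_eq_iff (hA0 i)]
      ring
    have hpow : (-1 : ℝ) ^ (m - 1) * (-1 : ℝ) ^ m = -1 := by
      have h1 : (-1 : ℝ) ^ m = (-1 : ℝ) ^ (m - 1) * (-1) := by
        rw [← pow_succ]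
        congr 1
        omega
      rw [h1, ← mul_assoc, ← pow_add, Even.neg_one_pow ⟨m - 1, rfl⟩, one_mul]
    have hS : ∑ i, A i / (A i - b) * r i = -1 := by
      calc ∑ i, A i / (A i - b) * r i
          = ∑ i : Fin m, (-1 : ℝ) ^ (m - 1) *
              (f.eval (A i) * ((A i - b)⁻¹ * ∏ l ∈ Finset.univ.erase i, (A i - A l)⁻¹)) :=
            Finset.sum_congr rfl fun i _ => hterm i
        _ = (-1 : ℝ) ^ (m - 1) * ∑ i : Fin m,
              f.eval (A i) * ((A i - b)⁻¹ * ∏ l ∈ Finset.univ.erase i, (A i - A l)⁻¹) :=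
            (Finset.mul_sum _ _ _).symm
        _ = (-1 : ℝ) ^ (m - 1) * (-1 : ℝ) ^ m := by rw [key2]
        _ = -1 := hpow
    rw [hS]
    ring
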